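/- (Lemma 1, feature part: E(3)-invariance of the bilevel attention feature update.) In the bilevel attention setup, define the feature update h'ᵢ(p) = hᵢ(p) + ∑_{j∈J} β_j • φ_m(∑_q α_j[p,q] • (W_Vᵀ h_j(q))). Then h'ᵢ is invariant under rigid motions: replacing every coordinate x of every atom of every block by Q x + t, for any 3×3 real orthogonal matrix Q and t ∈ ℝ³, yields the same function h'ᵢ. -/
import Mathlib


open scoped BigOperators RealInnerProductSpace

/-- Atom-level correlation between block `i` and a neighbor block `j`:
`R[p,q] = (1/√d_r) ⟨W_Qᵀ hᵢ(p), W_Kᵀ h_j(q)⟩ + σ_D(‖xᵢ(p) − x_j(q)‖)`. -/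
noncomputable def Rcorr {d dr ni nj : ℕ}
    (WQ WK : Matrix (Fin d) (Fin dr) ℝ) (σD : ℝ → ℝ)
    (hi : Fin ni → EuclideanSpace ℝ (Fin d)) (xi : Fin ni → EuclideanSpace ℝ (Fin 3))
    (hj : Fin nj → EuclideanSpace ℝ (Fin d)) (xj : Fin nj → EuclideanSpace ℝ (Fin 3))
    (p : Fin ni) (q : Fin nj) : ℝ :=
  (1 / Real.sqrt dr) *
      ⟪Matrix.toEuclideanLin WQ.transpose (hi p),
        Matrix.toEuclideanLin WK.transpose (hj q)⟫
    + σD ‖xi p - xj q‖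

/-- Atom-level cross attention `α[p,q] = exp(R[p,q]) / ∑_{q'} exp(R[p,q'])`. -/
noncomputable def alphaAtt {d dr ni nj : ℕ}
    (WQ WK : Matrix (Fin d) (Fin dr) ℝ) (σD : ℝ → ℝ)
    (hi : Fin ni → EuclideanSpace ℝ (Fin d)) (xi : Fin ni → EuclideanSpace ℝ (Fin 3))
    (hj : Fin nj → EuclideanSpace ℝ (Fin d)) (xj : Fin nj → EuclideanSpace ℝ (Fin 3))
    (p : Fin ni) (q : Fin nj) : ℝ :=
  Real.exp (Rcorr WQ WK σD hi xi hj xj p q) /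
    ∑ q' : Fin nj, Real.exp (Rcorr WQ WK σD hi xi hj xj p q')

/-- Block-level correlation `r_j = (1/(nᵢ n_j)) ∑_{p,q} R_j[p,q] + e_j`. -/
noncomputable def rBlock {d dr ni nj : ℕ}
    (WQ WK : Matrix (Fin d) (Fin dr) ℝ) (σD : ℝ → ℝ)
    (hi : Fin ni → EuclideanSpace ℝ (Fin d)) (xi : Fin ni → EuclideanSpace ℝ (Fin 3))
    (hj : Fin nj → EuclideanSpace ℝ (Fin d)) (xj : Fin nj → EuclideanSpace ℝ (Fin 3))
    (ej : ℝ) : ℝ :=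
  (1 / ((ni : ℝ) * (nj : ℝ))) *
      (∑ p : Fin ni, ∑ q : Fin nj, Rcorr WQ WK σD hi xi hj xj p q)
    + ej

/-- Block-level cross attention `β_j = exp(r_j) / ∑_{j'∈J} exp(r_{j'})`. -/
noncomputable def betaAtt {d dr ni : ℕ} {ι : Type*} [Fintype ι]
    (WQ WK : Matrix (Fin d) (Fin dr) ℝ) (σD : ℝ → ℝ)
    (hi : Fin ni → EuclideanSpace ℝ (Fin d)) (xi : Fin ni → EuclideanSpace ℝ (Fin 3))
    (nb : ι → ℕ)
    (hb : ∀ j, Fin (nb j) → EuclideanSpace ℝ (Fin d))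
    (xb : ∀ j, Fin (nb j) → EuclideanSpace ℝ (Fin 3))
    (e : ι → ℝ) (j : ι) : ℝ :=
  Real.exp (rBlock WQ WK σD hi xi (hb j) (xb j) (e j)) /
    ∑ j' : ι, Real.exp (rBlock WQ WK σD hi xi (hb j') (xb j') (e j'))

/-- Coordinate update of the bilevel attention module:
`x'ᵢ(p) = xᵢ(p) + ∑_{j∈J} β_j ∑_q α_j[p,q] · φ_X(R_j[p,q]) • (xᵢ(p) − x_j(q))`. -/
noncomputable def coordUpdate {d dr ni : ℕ} {ι : Type*} [Fintype ι]
    (WQ WK : Matrix (Fin d) (Fin dr) ℝ) (σD : ℝ → ℝ) (φX : ℝ → ℝ)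
    (hi : Fin ni → EuclideanSpace ℝ (Fin d)) (xi : Fin ni → EuclideanSpace ℝ (Fin 3))
    (nb : ι → ℕ)
    (hb : ∀ j, Fin (nb j) → EuclideanSpace ℝ (Fin d))
    (xb : ∀ j, Fin (nb j) → EuclideanSpace ℝ (Fin 3))
    (e : ι → ℝ) (p : Fin ni) : EuclideanSpace ℝ (Fin 3) :=
  xi p + ∑ j : ι, betaAtt WQ WK σD hi xi nb hb xb e j •
    ∑ q : Fin (nb j),
      (alphaAtt WQ WK σD hi xi (hb j) (xb j) p q *
        φX (Rcorr WQ WK σD hi xi (hb j) (xb j) p q)) • (xi p - xb j q)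

/-- Feature update of the bilevel attention module:
`h'ᵢ(p) = hᵢ(p) + ∑_{j∈J} β_j • φ_m(∑_q α_j[p,q] • (W_Vᵀ h_j(q)))`. -/
noncomputable def featUpdate {d dr dv ni : ℕ} {ι : Type*} [Fintype ι]
    (WQ WK : Matrix (Fin d) (Fin dr) ℝ) (WV : Matrix (Fin d) (Fin dv) ℝ)
    (σD : ℝ → ℝ) (φm : EuclideanSpace ℝ (Fin dv) → EuclideanSpace ℝ (Fin d))
    (hi : Fin ni → EuclideanSpace ℝ (Fin d)) (xi : Fin ni → EuclideanSpace ℝ (Fin 3))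
    (nb : ι → ℕ)
    (hb : ∀ j, Fin (nb j) → EuclideanSpace ℝ (Fin d))
    (xb : ∀ j, Fin (nb j) → EuclideanSpace ℝ (Fin 3))
    (e : ι → ℝ) (p : Fin ni) : EuclideanSpace ℝ (Fin d) :=
  hi p + ∑ j : ι, betaAtt WQ WK σD hi xi nb hb xb e j •
    φm (∑ q : Fin (nb j),
      alphaAtt WQ WK σD hi xi (hb j) (xb j) p q •
        Matrix.toEuclideanLin WV.transpose (hb j q))


private lemma norm_Q_sub {n : ℕ} (Q : Matrix (Fin n) (Fin n) ℝ)
    (hQ : Q ∈ Matrix.orthogonalGroup (Fin n) ℝ)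
    (x y t : EuclideanSpace ℝ (Fin n)) :
    ‖(Matrix.toEuclideanLin Q x + t) - (Matrix.toEuclideanLin Q y + t)‖ = ‖x - y‖ := by
  have h1 : (Matrix.toEuclideanLin Q x + t) - (Matrix.toEuclideanLin Q y + t)
      = Matrix.toEuclideanLin Q (x - y) := by
    rw [map_sub]; abel
  rw [h1]
  have key : ∀ v : EuclideanSpace ℝ (Fin n), ‖Matrix.toEuclideanLin Q v‖ = ‖v‖ := by
    intro v
    have hsq : ⟪Matrix.toEuclideanLin Q v, Matrix.toEuclideanLin Q v⟫
        = ⟪v, v⟫ := by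
      have := Matrix.toEuclideanLin_conjTranspose_eq_adjoint (𝕜 := ℝ) Q
      have hadj : ⟪Matrix.toEuclideanLin Q v, Matrix.toEuclideanLin Q v⟫
          = ⟪v, Matrix.toEuclideanLin Q.conjTranspose (Matrix.toEuclideanLin Q v)⟫ := by
        rw [this, LinearMap.adjoint_inner_right]
      rw [hadj]
      have hmul : Matrix.toEuclideanLin Q.conjTranspose (Matrix.toEuclideanLin Q v)
          = Matrix.toEuclideanLin (Q.conjTranspose * Q) v := by
        simp [Matrix.toEuclideanLin_apply, Matrix.mulVec_mulVec]
      rw [hmul]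
      have hone : Q.conjTranspose * Q = 1 := by
        have := (Matrix.mem_orthogonalGroup_iff' (Fin n) ℝ).mp hQ
        simpa [Matrix.star_eq_conjTranspose] using this
      rw [hone]
      simp [Matrix.toEuclideanLin_apply]
    have h2 : ‖Matrix.toEuclideanLin Q v‖ ^ 2 = ‖v‖ ^ 2 := by
      rw [← real_inner_self_eq_norm_sq, ← real_inner_self_eq_norm_sq, hsq]
    nlinarith [norm_nonneg (Matrix.toEuclideanLin Q v), norm_nonneg v]
  exact key (x - y)

private lemma Rcorr_transform {d dr ni nj : ℕ}
    (WQ WK : Matrix (Fin d) (Fin dr) ℝ) (σD : ℝ → ℝ)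
    (hi : Fin ni → EuclideanSpace ℝ (Fin d)) (xi : Fin ni → EuclideanSpace ℝ (Fin 3))
    (hj : Fin nj → EuclideanSpace ℝ (Fin d)) (xj : Fin nj → EuclideanSpace ℝ (Fin 3))
    (Q : Matrix (Fin 3) (Fin 3) ℝ) (hQ : Q ∈ Matrix.orthogonalGroup (Fin 3) ℝ)
    (t : EuclideanSpace ℝ (Fin 3)) :
    Rcorr WQ WK σD hi (fun p => Matrix.toEuclideanLin Q (xi p) + t)
        hj (fun q => Matrix.toEuclideanLin Q (xj q) + t)
      = Rcorr WQ WK σD hi xi hj xj := by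
  funext p q
  simp only [Rcorr, norm_Q_sub Q hQ]

theorem featUpdate_E3_invariant {d dr dv ni : ℕ} {ι : Type*} [Fintype ι] [Nonempty ι]
    (hni : 1 ≤ ni) (nb : ι → ℕ) (hnb : ∀ j, 1 ≤ nb j)
    (WQ WK : Matrix (Fin d) (Fin dr) ℝ) (WV : Matrix (Fin d) (Fin dv) ℝ)
    (σD : ℝ → ℝ) (φm : EuclideanSpace ℝ (Fin dv) → EuclideanSpace ℝ (Fin d))
    (hi : Fin ni → EuclideanSpace ℝ (Fin d)) (xi : Fin ni → EuclideanSpace ℝ (Fin 3))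
    (hb : ∀ j, Fin (nb j) → EuclideanSpace ℝ (Fin d))
    (xb : ∀ j, Fin (nb j) → EuclideanSpace ℝ (Fin 3))
    (e : ι → ℝ)
    (Q : Matrix (Fin 3) (Fin 3) ℝ) (hQ : Q ∈ Matrix.orthogonalGroup (Fin 3) ℝ)
    (t : EuclideanSpace ℝ (Fin 3)) :
    featUpdate WQ WK WV σD φm hi (fun p => Matrix.toEuclideanLin Q (xi p) + t)
        nb hb (fun j q => Matrix.toEuclideanLin Q (xb j q) + t) e
      = featUpdate WQ WK WV σD φm hi xi nb hb xb e := by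
  have hR : ∀ (nj : ℕ) (hj : Fin nj → EuclideanSpace ℝ (Fin d))
      (xj : Fin nj → EuclideanSpace ℝ (Fin 3)),
      Rcorr WQ WK σD hi (fun p => Matrix.toEuclideanLin Q (xi p) + t)
          hj (fun q => Matrix.toEuclideanLin Q (xj q) + t)
        = Rcorr WQ WK σD hi xi hj xj :=
    fun nj hj xj => Rcorr_transform WQ WK σD hi xi hj xj Q hQ t
  funext p
  simp only [featUpdate, alphaAtt, betaAtt, rBlock, hR]
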